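/- For every real number R that is not an integer, the sequence N ↦ (-1)^N C(R, N) is asymptotically equivalent, as the natural number N tends to infinity, to N ↦ -(sin(πR)/π) · Γ(R+1) · N^{-R-1}; that is, the ratio of the two sides tends to 1. -/

import Mathlib

open Finset Filter Real

/-- Generalized binomial coefficient C(R,k) = R(R-1)⋯(R-k+1)/k! for real R and natural k. -/
noncomputable def genBinom (R : ℝ) (k : ℕ) : ℝ :=
  (∏ i ∈ Finset.range k, (R - i)) / (Nat.factorial k)

/-- For non-integer real R, as N → ∞,
    (-1)^N C(R,N) ∼ -(sin(πR)/π) Γ(R+1) N^{-R-1}: the ratio tends to 1. -/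
theorem genBinom_asymptotic (R : ℝ) (hR : ∀ n : ℤ, R ≠ (n : ℝ)) :
    Filter.Tendsto
      (fun N : ℕ =>
        ((-1 : ℝ) ^ N * genBinom R N)
          / (-(Real.sin (Real.pi * R) / Real.pi) * Real.Gamma (R + 1) * (N : ℝ) ^ (-R - 1)))
      Filter.atTop (nhds 1) := by
  have hsin : Real.sin (Real.pi * R) ≠ 0 := by
    intro h
    rcases Real.sin_eq_zero_iff.mp h with ⟨n, hn⟩
    have : Real.pi * (n : ℝ) = Real.pi * R := by linarith
    exact hR n (mul_left_cancel₀ Real.pi_ne_zero this).symm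
  have hG : Real.Gamma (-R) ≠ 0 := by
    refine Real.Gamma_ne_zero fun m => ?_
    intro h
    exact hR m (by push_cast; linarith [h])
  have hrefl : -(Real.sin (Real.pi * R) / Real.pi) * Real.Gamma (R + 1)
      = 1 / Real.Gamma (-R) := by
    have h := Real.Gamma_mul_Gamma_one_sub (-R)
    rw [sub_neg_eq_add, mul_neg, Real.sin_neg, div_neg, add_comm 1 R] at h
    rw [eq_div_iff hG]
    field_simp
    field_simp at h
    have h2 : Real.Gamma (-R) * Real.Gamma (R + 1) * Real.sin (Real.pi * R) = -Real.pi := by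
      rw [h, mul_comm R Real.pi]; field_simp
    linarith [h2]
  -- the comparison function
  have key : ∀ᶠ N : ℕ in atTop,
      Real.Gamma (-R) * ((N : ℝ) / ((N : ℝ) - R)) / Real.GammaSeq (-R) N
      = ((-1 : ℝ) ^ N * genBinom R N)
          / (-(Real.sin (Real.pi * R) / Real.pi) * Real.Gamma (R + 1) * (N : ℝ) ^ (-R - 1)) := by
    filter_upwards [eventually_ge_atTop 1] with N hN
    have hNpos : (0:ℝ) < N := by exact_mod_cast hN
    have hprodsucc : ∏ j ∈ Finset.range (N + 1), (-R + (j:ℝ))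
        = (∏ j ∈ Finset.range N, ((j:ℝ) - R)) * ((N:ℝ) - R) := by
      rw [Finset.prod_range_succ]
      congr 1
      · exact Finset.prod_congr rfl fun j _ => by ring
      · ring
    have hsign : (-1 : ℝ) ^ N * ∏ i ∈ Finset.range N, (R - (i:ℝ))
        = ∏ j ∈ Finset.range N, ((j:ℝ) - R) := by
      rw [show ∏ j ∈ Finset.range N, ((j:ℝ) - R)
            = ∏ i ∈ Finset.range N, (-1 : ℝ) * (R - (i:ℝ)) from
          Finset.prod_congr rfl fun j _ => by ring,
        Finset.prod_mul_distrib, Finset.prod_const, Finset.card_range]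
    have hP : (∏ j ∈ Finset.range N, ((j:ℝ) - R)) ≠ 0 := by
      refine Finset.prod_ne_zero_iff.mpr fun j _ => sub_ne_zero.mpr ?_
      exact fun h => hR j (by exact_mod_cast h.symm)
    have hNR : (N:ℝ) - R ≠ 0 := sub_ne_zero.mpr fun h => hR N (by exact_mod_cast h.symm)
    have hrp : (N:ℝ) ^ (-R) = (N:ℝ) ^ (-R - 1) * N := by
      rw [← Real.rpow_add_one hNpos.ne' (-R - 1)]; ring_nf
    have hrpne : (N:ℝ) ^ (-R - 1) ≠ 0 := (Real.rpow_pos_of_pos hNpos _).ne'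
    have hfac : (Nat.factorial N : ℝ) ≠ 0 := Nat.cast_ne_zero.mpr (Nat.factorial_ne_zero N)
    have hgb : (-1 : ℝ) ^ N * genBinom R N
        = (∏ j ∈ Finset.range N, ((j:ℝ) - R)) / (Nat.factorial N : ℝ) := by
      rw [genBinom, ← hsign]; ring
    rw [hgb, hrefl, Real.GammaSeq, hprodsucc, hrp]
    field_simp
  refine Tendsto.congr' key ?_
  have h1 : Filter.Tendsto (fun N : ℕ => Real.Gamma (-R) * ((N : ℝ) / ((N : ℝ) - R)))
      atTop (nhds (Real.Gamma (-R) * 1)) := by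
    refine Tendsto.const_mul _ ?_
    have := tendsto_natCast_div_add_atTop (𝕜 := ℝ) (-R)
    simpa [sub_eq_add_neg] using this
  have h2 := Real.GammaSeq_tendsto_Gamma (-R)
  have := h1.div h2 (by simpa using hG)
  simpa [hG, Pi.div_def] using this
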